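/- The bicyclic monoid B, presented by ⟨a, b | a*b = 1⟩, is not LEF. -/

import Mathlib

namespace Stmt7

/-- A semigroup `S` is LEF if for every finite subset `H` of `S` there exist a finite
semigroup `F` and a function `f : S → F` injective on `H` such that
`f (x * y) = f x * f y` whenever `x, y, x * y ∈ H`. -/
def IsLEF (S : Type*) [Semigroup S] : Prop :=
  ∀ H : Finset S, ∃ (F : Type) (_ : Semigroup F) (_ : Fintype F) (f : S → F),
    Set.InjOn f ↑H ∧
      ∀ x ∈ H, ∀ y ∈ H, x * y ∈ H → f (x * y) = f x * f y

/-- The generator `a` of the free monoid on two generators. -/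
def a : FreeMonoid (Fin 2) := FreeMonoid.of 0

/-- The generator `b` of the free monoid on two generators. -/
def b : FreeMonoid (Fin 2) := FreeMonoid.of 1

/-- The defining relation `a * b = 1`. -/
def rel : FreeMonoid (Fin 2) → FreeMonoid (Fin 2) → Prop :=
  fun x y => x = a * b ∧ y = 1

/-- The bicyclic monoid `B = ⟨a, b ∣ ab = 1⟩`. -/
def B : Type := (conGen rel).Quotient

instance : Monoid B := Con.monoid _

/-- The projection from the free monoid to the bicyclic monoid. -/
def toB (x : FreeMonoid (Fin 2)) : B := (x : (conGen rel).Quotient)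

lemma toB_mul (x y : FreeMonoid (Fin 2)) : toB (x * y) = toB x * toB y := rfl

lemma toB_one : toB 1 = 1 := rfl

/-- The monoid hom to `Function.End ℕ` sending `a ↦ pred`, `b ↦ succ`. -/
noncomputable def φ : FreeMonoid (Fin 2) →* Function.End ℕ :=
  FreeMonoid.lift ![fun n => n - 1, Nat.succ]

/-- `ba ≠ 1` in the bicyclic monoid, witnessed by the action on `ℕ`. -/
lemma ba_ne_one : toB (b * a) ≠ (1 : B) := by
  intro h
  have hc : (conGen rel) (b * a) 1 := (Con.eq _).1 h
  have hle : conGen rel ≤ Con.ker φ := by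
    apply Con.conGen_le.2
    rintro x y ⟨hx, hy⟩
    subst hx; subst hy
    show φ (a * b) = φ 1
    rw [map_mul, map_one]
    have ha : φ a = (fun n => n - 1 : Function.End ℕ) := FreeMonoid.lift_eval_of _ 0
    have hb : φ b = (Nat.succ : Function.End ℕ) := FreeMonoid.lift_eval_of _ 1
    rw [ha, hb]
    funext n
    show (n + 1) - 1 = n
    omega
  have h2 := hle hc
  rw [Con.ker_rel] at h2
  have h0 : φ (b * a) 0 = φ 1 0 := by rw [h2]
  have ha : φ a = (fun n => n - 1 : Function.End ℕ) := FreeMonoid.lift_eval_of _ 0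
  have hb : φ b = (Nat.succ : Function.End ℕ) := FreeMonoid.lift_eval_of _ 1
  rw [map_mul, ha, hb, map_one] at h0
  exact absurd h0 (by decide)

/-- `ab = 1` in the bicyclic monoid. -/
lemma ab_eq_one : toB a * toB b = (1 : B) := by
  rw [← toB_mul]
  exact (Con.eq _).2 (ConGen.Rel.of _ _ ⟨rfl, rfl⟩)

/-- The bicyclic monoid `B = ⟨a, b ∣ ab = 1⟩` is not LEF. -/
theorem bicyclic_not_isLEF : ¬ IsLEF B := by
  classical
  intro hLEF
  set A : B := toB a with hA
  set Bb : B := toB b with hB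
  obtain ⟨F, _, _, f, hinj, hmul⟩ := hLEF ({1, A, Bb, Bb * A} : Finset B)
  have h1 : (1 : B) ∈ ({1, A, Bb, Bb * A} : Finset B) := by simp
  have hAm : A ∈ ({1, A, Bb, Bb * A} : Finset B) := by simp
  have hBm : Bb ∈ ({1, A, Bb, Bb * A} : Finset B) := by simp
  have hBAm : Bb * A ∈ ({1, A, Bb, Bb * A} : Finset B) := by simp
  set e := f 1 with he
  set α := f A with hα
  set β := f Bb with hβ
  set γ := f (Bb * A) with hγ
  have hee : e * e = e := by
    have := hmul 1 h1 1 h1 (by simpa using h1); simpa using this.symm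
  have heα : e * α = α := by
    have := hmul 1 h1 A hAm (by simpa using hAm); simpa using this.symm
  have hαe : α * e = α := by
    have := hmul A hAm 1 h1 (by simpa using hAm); simpa using this.symm
  have heβ : e * β = β := by
    have := hmul 1 h1 Bb hBm (by simpa using hBm); simpa using this.symm
  have hβe : β * e = β := by
    have := hmul Bb hBm 1 h1 (by simpa using hBm); simpa using this.symm
  have heγ : e * γ = γ := by
    have := hmul 1 h1 (Bb * A) hBAm (by simpa using hBAm); simpa using this.symm
  have hγe : γ * e = γ := by
    have := hmul (Bb * A) hBAm 1 h1 (by simpa using hBAm); simpa using this.symm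
  have hαβ : α * β = e := by
    have hab : A * Bb = 1 := ab_eq_one
    have := hmul A hAm Bb hBm (by rw [hab]; exact h1)
    rw [hab] at this; exact this.symm
  have hβα : β * α = γ := (hmul Bb hBm A hAm hBAm).symm
  -- the local monoid `eFe` as a subtype; `x ↦ α * x * β` is a bijection on it
  let S := {x : F // e * x = x ∧ x * e = x}
  haveI : Finite S := Subtype.finite
  let s : S → S := fun x => ⟨α * x.1 * β, by
    constructor
    · rw [← mul_assoc, ← mul_assoc, heα]
    · rw [mul_assoc, hβe]⟩
  have hsurj : Function.Surjective s := by
    intro y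
    refine ⟨⟨β * y.1 * α, ?_, ?_⟩, ?_⟩
    · rw [← mul_assoc, ← mul_assoc, heβ]
    · rw [mul_assoc, hαe]
    · apply Subtype.ext
      show α * (β * y.1 * α) * β = y.1
      simp only [← mul_assoc]
      rw [hαβ, y.2.1, mul_assoc, hαβ, y.2.2]
  have hsinj : Function.Injective s := Finite.injective_iff_surjective.2 hsurj
  have hsγ : s ⟨γ, heγ, hγe⟩ = ⟨e, hee, hee⟩ := by
    apply Subtype.ext
    show α * γ * β = e
    rw [← hβα]
    simp only [← mul_assoc]
    rw [hαβ, heα]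
    exact hαβ
  have hse : s ⟨e, hee, hee⟩ = ⟨e, hee, hee⟩ := by
    apply Subtype.ext
    show α * e * β = e
    rw [hαe, hαβ]
  have hγe' : γ = e := congrArg Subtype.val (hsinj (hsγ.trans hse.symm))
  have hfin : Bb * A = 1 := hinj (by simpa using hBAm) (by simp) hγe'
  exact ba_ne_one (by rw [toB_mul, ← hB, ← hA, hfin])

end Stmt7
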